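/- For every n ≥ 1, there exist polynomials P_d(s,t) ∈ ℤ[s,t] for each divisor d of n (with P_1 = 1) such that {n} = ∏_{d|n} P_d(s,t), where P_d(s,t) is the image of the d-th cyclotomic polynomial Φ_d(q) under the Gamma map. Concretely: P_d(1+q, -q) = Φ_d(q) for all d ≥ 2. -/

import Mathlib

open MvPolynomial

noncomputable def lucas : ℕ → MvPolynomial (Fin 2) ℤ
  | 0 => 0
  | 1 => 1
  | (n+2) => X 0 * lucas (n+1) + X 1 * lucas n

section LucasAux

open Polynomial Finset

abbrev ww : Fin 2 → ℕ := ![1, 2]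
noncomputable abbrev vv : Fin 2 → Polynomial ℤ := ![1 + Polynomial.X, -Polynomial.X]


lemma aeval_lucas : ∀ n : ℕ, MvPolynomial.aeval vv (lucas n) = ∑ i ∈ range n, (Polynomial.X : Polynomial ℤ) ^ i
  | 0 => by simp [lucas]
  | 1 => by simp [lucas]
  | (n+2) => by
    rw [lucas]
    simp only [map_add, map_mul, MvPolynomial.aeval_X]
    rw [aeval_lucas (n+1), aeval_lucas n]
    rw [Finset.sum_range_succ, Finset.sum_range_succ (n := n+1), Finset.sum_range_succ]
    simp only [Matrix.cons_val_zero, Matrix.cons_val_one, Matrix.head_cons]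
    ring

lemma lucas_whomog : ∀ n : ℕ, IsWeightedHomogeneous ww (lucas n) (n - 1)
  | 0 => by rw [lucas]; exact isWeightedHomogeneous_zero ℤ ww 0
  | 1 => by rw [lucas]; exact isWeightedHomogeneous_one ℤ ww
  | (n+2) => by
    rw [lucas]
    apply IsWeightedHomogeneous.add
    · have h := (isWeightedHomogeneous_X ℤ ww 0).mul (lucas_whomog (n+1))
      have : ww 0 + (n + 1 - 1) = n + 2 - 1 := by simp [ww]; omega
      rwa [this] at h
    · cases n with
      | zero => rw [lucas, mul_zero]; exact isWeightedHomogeneous_zero ℤ ww _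
      | succ m =>
        have h := (isWeightedHomogeneous_X ℤ ww 1).mul (lucas_whomog (m+1))
        have : ww 1 + (m + 1 - 1) = m + 1 + 2 - 1 := by simp [ww]; omega
        rwa [this] at h

lemma lin_indep : ∀ (k m : ℕ) (c : ℕ → ℤ),
    (∑ j ∈ range k, Polynomial.C (c j) * ((1 + Polynomial.X : Polynomial ℤ) ^ (m - 2*j) * Polynomial.X ^ j) = 0) →
    ∀ j < k, c j = 0 := by
  intro k
  induction k with
  | zero => intro m c _ j hj; omega
  | succ k IH =>
    intro m c hsum
    have hc0 : c 0 = 0 := by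
      have h := congrArg (Polynomial.eval 0) hsum
      rw [Polynomial.eval_finset_sum] at h
      simp only [Polynomial.eval_mul, Polynomial.eval_pow, Polynomial.eval_add,
        Polynomial.eval_one, Polynomial.eval_X, Polynomial.eval_C, add_zero, one_pow, one_mul,
        Polynomial.eval_zero] at h
      rw [Finset.sum_eq_single 0 (by intro b _ hb; simp [zero_pow hb]) (by simp)] at h
      simpa using h
    rw [Finset.sum_range_succ' _ k] at hsum
    have hterm : ∀ i, Polynomial.C (c (i+1)) * ((1 + Polynomial.X : Polynomial ℤ) ^ (m - 2*(i+1)) * Polynomial.X ^ (i+1))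
        = Polynomial.X * (Polynomial.C (c (i+1)) * ((1 + Polynomial.X) ^ ((m-2) - 2*i) * Polynomial.X ^ i)) := by
      intro i
      rw [show m - 2*(i+1) = (m-2) - 2*i by omega, pow_succ]
      ring
    rw [Finset.sum_congr rfl (fun i _ => hterm i), ← Finset.mul_sum, hc0] at hsum
    simp only [Polynomial.C_0, zero_mul, add_zero, pow_zero, mul_one] at hsum
    have hinner : ∑ i ∈ range k, Polynomial.C (c (i+1)) * ((1 + Polynomial.X : Polynomial ℤ) ^ ((m-2) - 2*i) * Polynomial.X ^ i) = 0 := by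
      rcases mul_eq_zero.mp hsum with h | h
      · exact absurd h Polynomial.X_ne_zero
      · exact h
    have := IH (m-2) (fun i => c (i+1)) hinner
    intro j hj
    cases j with
    | zero => exact hc0
    | succ i => exact this i (by omega)

lemma weight_eval (d : Fin 2 →₀ ℕ) : (Finsupp.weight ww) d = d 0 * 1 + d 1 * 2 := by
  rw [Finsupp.weight_apply, Finsupp.sum_fintype _ _ (by simp)]
  simp [Fin.sum_univ_two, ww, smul_eq_mul]

lemma monomial_eq_two (d : Fin 2 →₀ ℕ) (c : ℤ) :
    monomial d c = MvPolynomial.C c * X 0 ^ d 0 * X 1 ^ d 1 := by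
  rw [MvPolynomial.monomial_eq, Finsupp.prod_fintype _ _ (by simp), Fin.prod_univ_two, mul_assoc]

lemma whomog_rep {f : MvPolynomial (Fin 2) ℤ} {m : ℕ} (hf : IsWeightedHomogeneous ww f m) :
    ∃ c : ℕ → ℤ, f = ∑ j ∈ Finset.range (m+1),
      MvPolynomial.C (c j) * (X 0 ^ (m - 2*j) * X 1 ^ j) := by
  classical
  set D : ℕ → (Fin 2 →₀ ℕ) := fun j => Finsupp.single 0 (m - 2*j) + Finsupp.single 1 j with hD
  have hD1 : ∀ j, D j 1 = j := by intro j; simp [hD, Finsupp.single_apply]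
  have hD0 : ∀ j, D j 0 = m - 2*j := by intro j; simp [hD, Finsupp.single_apply]
  have hDinj : ∀ a ∈ range (m+1), ∀ b ∈ range (m+1), D a = D b → a = b := by
    intro a _ b _ h
    have := congrArg (fun g => g 1) h
    simpa [hD1] using this
  refine ⟨fun j => MvPolynomial.coeff (D j) f, ?_⟩
  have hsub : f.support ⊆ Finset.image D (range (m+1)) := by
    intro d hd
    have hw : (Finsupp.weight ww) d = m := hf (MvPolynomial.mem_support_iff.mp hd)
    rw [weight_eval] at hw
    have hdD : d = D (d 1) := by
      ext i
      fin_cases i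
      · show d 0 = D (d 1) 0
        rw [hD0]; omega
      · show d 1 = D (d 1) 1
        rw [hD1]
    rw [hdD]
    exact Finset.mem_image_of_mem D (Finset.mem_range.mpr (by omega))
  calc f = ∑ d ∈ f.support, monomial d (MvPolynomial.coeff d f) :=
        (support_sum_monomial_coeff f).symm
    _ = ∑ d ∈ Finset.image D (range (m+1)), monomial d (MvPolynomial.coeff d f) := by
        refine Finset.sum_subset hsub ?_
        intro d _ hd
        rw [MvPolynomial.notMem_support_iff.mp hd, monomial_zero]
    _ = ∑ j ∈ range (m+1), monomial (D j) (MvPolynomial.coeff (D j) f) :=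
        Finset.sum_image hDinj
    _ = ∑ j ∈ range (m+1), MvPolynomial.C (MvPolynomial.coeff (D j) f) * (X 0 ^ (m - 2*j) * X 1 ^ j) := by
        refine Finset.sum_congr rfl fun j _ => ?_
        rw [monomial_eq_two, hD0, hD1, mul_assoc]

lemma X0_pow_whomog (m : ℕ) : IsWeightedHomogeneous ww ((X 0 : MvPolynomial (Fin 2) ℤ) ^ m) m := by
  rw [MvPolynomial.X_pow_eq_monomial]
  apply isWeightedHomogeneous_monomial
  rw [Finsupp.weight_apply, Finsupp.sum_single_index (by simp)]
  simp [ww]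

lemma aeval_C_int (a : ℤ) : (algebraMap ℤ (Polynomial ℤ)) a = Polynomial.C a := by
  rw [eq_intCast]
  exact (Polynomial.C_eq_intCast a).symm

lemma g_facts (m : ℕ) (f : Polynomial ℤ) (hdeg : f.natDegree ≤ m)
    (hsym : ∀ i ≤ m, f.coeff (m - i) = f.coeff i) :
    (∀ i ≤ m, (f - Polynomial.C (f.coeff 0) * (Polynomial.X + 1) ^ m).coeff (m - i)
      = (f - Polynomial.C (f.coeff 0) * (Polynomial.X + 1) ^ m).coeff i) ∧
    (f - Polynomial.C (f.coeff 0) * (Polynomial.X + 1) ^ m).coeff 0 = 0 ∧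
    (f - Polynomial.C (f.coeff 0) * (Polynomial.X + 1) ^ m).coeff m = 0 ∧
    (f - Polynomial.C (f.coeff 0) * (Polynomial.X + 1) ^ m).natDegree ≤ m := by
  set a := f.coeff 0 with ha
  set g := f - Polynomial.C a * (Polynomial.X + 1) ^ m with hg
  have hgc : ∀ j, g.coeff j = f.coeff j - a * (m.choose j) := by
    intro j
    simp [hg, Polynomial.coeff_X_add_one_pow, mul_comm]
  have hgsym : ∀ i ≤ m, g.coeff (m - i) = g.coeff i := by
    intro i hi
    rw [hgc, hgc, hsym i hi, Nat.choose_symm hi]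
  have hgc0 : g.coeff 0 = 0 := by rw [hgc]; simp [ha]
  have hgcm : g.coeff m = 0 := by
    have := hgsym 0 (Nat.zero_le m); simpa [hgc0] using this
  refine ⟨hgsym, hgc0, hgcm, ?_⟩
  refine le_trans (Polynomial.natDegree_sub_le _ _) (max_le hdeg ?_)
  refine le_trans (Polynomial.natDegree_mul_le) ?_
  simp only [Polynomial.natDegree_C, zero_add]
  have h1 : (Polynomial.X + 1 : Polynomial ℤ).natDegree = 1 := by
    simpa using Polynomial.natDegree_X_add_C (1:ℤ)
  exact le_trans Polynomial.natDegree_pow_le (by rw [h1]; omega)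

lemma span_pal : ∀ (m : ℕ) (f : Polynomial ℤ), f.natDegree ≤ m →
    (∀ i ≤ m, f.coeff (m - i) = f.coeff i) →
    ∃ P : MvPolynomial (Fin 2) ℤ, IsWeightedHomogeneous ww P m ∧ MvPolynomial.aeval vv P = f := by
  intro m
  induction m using Nat.strong_induction_on with
  | _ m IH =>
  intro f hdeg hsym
  rcases m with _ | _ | k
  · refine ⟨MvPolynomial.C (f.coeff 0), isWeightedHomogeneous_C ww _, ?_⟩
    rw [Polynomial.eq_C_of_natDegree_le_zero hdeg]
    simp [aeval_C_int]
  · obtain ⟨hgsym, hgc0, hgcm, hgd⟩ := g_facts 1 f hdeg hsym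
    set a := f.coeff 0 with ha
    have hg0 : f - Polynomial.C a * (Polynomial.X + 1) ^ 1 = 0 := by
      ext i
      rcases Nat.lt_or_ge i 2 with hi | hi
      · interval_cases i
        · simpa using hgc0
        · simpa using hgcm
      · simp only [Polynomial.coeff_zero]
        exact Polynomial.coeff_eq_zero_of_natDegree_lt (lt_of_le_of_lt hgd (by omega))
    have hf : f = Polynomial.C a * (Polynomial.X + 1) := by
      have h2 := sub_eq_zero.mp hg0
      rw [h2]; ring
    refine ⟨MvPolynomial.C a * X 0, ?_, ?_⟩
    · have h := (isWeightedHomogeneous_C ww a).mul (isWeightedHomogeneous_X ℤ ww 0)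
      simpa using h
    · simp only [map_mul, MvPolynomial.aeval_X, MvPolynomial.aeval_C, aeval_C_int]
      rw [hf]
      simp only [Matrix.cons_val_zero]
      ring
  · obtain ⟨hgsym, hgc0, hgcm, hgd⟩ := g_facts (k+2) f hdeg hsym
    set a := f.coeff 0 with ha
    set g := f - Polynomial.C a * (Polynomial.X + 1) ^ (k+2) with hg
    obtain ⟨h, hgh⟩ := Polynomial.X_dvd_iff.mpr hgc0
    have hhc : ∀ i, h.coeff i = g.coeff (i+1) := by
      intro i; rw [hgh, Polynomial.coeff_X_mul]
    have hhd : h.natDegree ≤ k := by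
      rw [Polynomial.natDegree_le_iff_coeff_eq_zero]
      intro i hi
      rw [hhc]
      rcases Nat.lt_or_ge (k+2) (i+1) with hc | hc
      · exact Polynomial.coeff_eq_zero_of_natDegree_lt (lt_of_le_of_lt hgd hc)
      · have h2 : i + 1 = k + 2 := by omega
        rw [h2]; exact hgcm
    have hhsym : ∀ i ≤ k, h.coeff (k - i) = h.coeff i := by
      intro i hi
      rw [hhc, hhc, show k - i + 1 = (k+2) - (i+1) by omega]
      exact hgsym (i+1) (by omega)
    obtain ⟨Q, hQw, hQa⟩ := IH k (by omega) h hhd hhsym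
    refine ⟨MvPolynomial.C a * X 0 ^ (k+2) + (- X 1) * Q, ?_, ?_⟩
    · apply IsWeightedHomogeneous.add
      · have h2 := (isWeightedHomogeneous_C ww a).mul (X0_pow_whomog (k+2))
        simpa using h2
      · have hX1 : IsWeightedHomogeneous ww (-(X 1) : MvPolynomial (Fin 2) ℤ) 2 := by
          have h2 := (isWeightedHomogeneous_C ww (-1 : ℤ)).mul (isWeightedHomogeneous_X ℤ ww 1)
          simpa using h2
        have h2 := hX1.mul hQw
        have he : 2 + k = k + 2 := by omega
        rwa [he] at h2
    · simp only [map_add, map_mul, map_pow, map_neg, MvPolynomial.aeval_X, MvPolynomial.aeval_C,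
        aeval_C_int, hQa]
      simp only [Matrix.cons_val_zero, Matrix.cons_val_one, Matrix.head_cons, neg_neg]
      have hf : f = Polynomial.C a * (Polynomial.X + 1) ^ (k+2) + Polynomial.X * h := by
        rw [← hgh, hg]; ring
      rw [hf]
      ring

lemma reflect_prod {ι : Type*} (s : Finset ι) (f : ι → Polynomial ℤ) (N : ι → ℕ)
    (h : ∀ i ∈ s, (f i).natDegree ≤ N i) :
    reflect (∑ i ∈ s, N i) (∏ i ∈ s, f i) = ∏ i ∈ s, reflect (N i) (f i) := by
  classical
  induction s using Finset.cons_induction with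
  | empty => simp [Polynomial.reflect_one]
  | cons a s ha IH =>
    rw [Finset.prod_cons, Finset.sum_cons, Finset.prod_cons,
      Polynomial.reflect_mul _ _ (h a (Finset.mem_cons_self a s))
        (le_trans (Polynomial.natDegree_prod_le s f) (Finset.sum_le_sum (fun i hi => h i (Finset.mem_cons_of_mem hi)))),
      IH (fun i hi => h i (Finset.mem_cons_of_mem hi))]

lemma cyclo_reflect : ∀ n : ℕ, 1 ≤ n →
    reflect (Nat.totient n) (cyclotomic n ℤ) = (if n = 1 then -1 else 1) * cyclotomic n ℤ := by
  intro n
  induction n using Nat.strong_induction_on with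
  | _ n IH =>
  intro hn
  rcases eq_or_lt_of_le hn with h1 | h2
  · rw [← h1]
    have hr : reflect 1 (cyclotomic 1 ℤ) = 1 - Polynomial.X := by
      rw [Polynomial.cyclotomic_one, Polynomial.reflect_sub,
        show (Polynomial.X : Polynomial ℤ) = Polynomial.X ^ 1 by rw [pow_one], Polynomial.reflect_monomial,
        show (1 : Polynomial ℤ) = Polynomial.C 1 by rw [map_one], Polynomial.reflect_C]
      norm_num [Polynomial.revAt_le]
    rw [Nat.totient_one, hr, Polynomial.cyclotomic_one, if_pos rfl]
    ring
  · -- n ≥ 2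
    have hn0 : n ≠ 0 := by omega
    have hE : ∏ d ∈ n.divisors, cyclotomic d ℤ = Polynomial.X ^ n - 1 :=
      prod_cyclotomic_eq_X_pow_sub_one (by omega) ℤ
    have hsum : ∑ d ∈ n.divisors, Nat.totient d = n := Nat.sum_totient n
    have hRP := reflect_prod n.divisors (fun d => cyclotomic d ℤ) (fun d => Nat.totient d)
      (fun d _ => le_of_eq (natDegree_cyclotomic d ℤ))
    rw [hsum, hE] at hRP
    have hRX : reflect n ((Polynomial.X : Polynomial ℤ) ^ n - 1) = 1 - Polynomial.X ^ n := by
      rw [Polynomial.reflect_sub, Polynomial.reflect_monomial, revAt_le (le_refl n),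
        Nat.sub_self, pow_zero]
      have : (1 : Polynomial ℤ) = Polynomial.C 1 := by simp
      rw [this, Polynomial.reflect_C]
      simp
    rw [hRX] at hRP
    -- split off n from divisors
    have hins : insert n n.properDivisors = n.divisors := Nat.insert_self_properDivisors hn0
    have hnmem : n ∉ n.properDivisors := fun h => (Nat.mem_properDivisors.mp h).2.false
    have hprodR : ∏ d ∈ n.divisors, reflect (Nat.totient d) (cyclotomic d ℤ)
        = reflect (Nat.totient n) (cyclotomic n ℤ) * ∏ d ∈ n.properDivisors, reflect (Nat.totient d) (cyclotomic d ℤ) := by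
      rw [← hins, Finset.prod_insert hnmem]
    have hIH : ∀ d ∈ n.properDivisors,
        reflect (Nat.totient d) (cyclotomic d ℤ) = (if d = 1 then -1 else 1) * cyclotomic d ℤ := by
      intro d hd
      obtain ⟨hdvd, hlt⟩ := Nat.mem_properDivisors.mp hd
      exact IH d hlt (Nat.one_le_iff_ne_zero.mpr (fun h => by simp [h] at hdvd; omega))
    have h1mem : 1 ∈ n.properDivisors := Nat.one_mem_properDivisors_iff_one_lt.mpr h2
    have hprodIH : ∏ d ∈ n.properDivisors, reflect (Nat.totient d) (cyclotomic d ℤ)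
        = - ∏ d ∈ n.properDivisors, cyclotomic d ℤ := by
      rw [Finset.prod_congr rfl hIH, Finset.prod_mul_distrib]
      have : ∏ d ∈ n.properDivisors, (if d = 1 then (-1 : Polynomial ℤ) else 1) = -1 := by
        rw [Finset.prod_eq_single_of_mem 1 h1mem (fun b _ hb => if_neg hb)]
        simp
      rw [this]
      ring
    have hEsplit : cyclotomic n ℤ * ∏ d ∈ n.properDivisors, cyclotomic d ℤ = Polynomial.X ^ n - 1 := by
      rw [← hE, ← hins, Finset.prod_insert hnmem]
    have hPne : (∏ d ∈ n.properDivisors, cyclotomic d ℤ) ≠ 0 :=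
      Finset.prod_ne_zero_iff.mpr (fun d _ => cyclotomic_ne_zero d ℤ)
    have key : reflect (Nat.totient n) (cyclotomic n ℤ) * ∏ d ∈ n.properDivisors, cyclotomic d ℤ
        = cyclotomic n ℤ * ∏ d ∈ n.properDivisors, cyclotomic d ℤ := by
      have := hRP
      rw [hprodR, hprodIH] at this
      rw [hEsplit]
      have h3 : (1 : Polynomial ℤ) - Polynomial.X ^ n = -(Polynomial.X ^ n - 1) := by ring
      rw [h3] at this
      linear_combination this
    have := mul_right_cancel₀ hPne key
    rw [this, if_neg (by omega)]
    ring

lemma whomog_aeval_inj {f g : MvPolynomial (Fin 2) ℤ} {m : ℕ}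
    (hf : IsWeightedHomogeneous ww f m) (hg : IsWeightedHomogeneous ww g m)
    (h : MvPolynomial.aeval vv f = MvPolynomial.aeval vv g) : f = g := by
  have hsub : IsWeightedHomogeneous ww (f - g) m := by
    rw [← mem_weightedHomogeneousSubmodule] at hf hg ⊢
    exact Submodule.sub_mem _ hf hg
  obtain ⟨c, hc⟩ := whomog_rep hsub
  have h0 : MvPolynomial.aeval vv (f - g) = 0 := by rw [map_sub, h, sub_self]
  rw [hc] at h0
  simp only [map_sum, map_mul, map_pow, MvPolynomial.aeval_X, MvPolynomial.aeval_C,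
    aeval_C_int, Matrix.cons_val_zero, Matrix.cons_val_one, Matrix.head_cons] at h0
  have h0' : ∑ j ∈ range (m+1), Polynomial.C ((-1)^j * c j) *
      ((1 + Polynomial.X : Polynomial ℤ) ^ (m - 2*j) * Polynomial.X ^ j) = 0 := by
    rw [← h0]
    refine Finset.sum_congr rfl fun j _ => ?_
    rw [map_mul, map_pow, map_neg, map_one, neg_pow]
    ring
  have hz := lin_indep (m+1) m _ h0'
  have hcz : ∀ j ∈ Finset.range (m+1), MvPolynomial.C (c j) * ((X 0 : MvPolynomial (Fin 2) ℤ) ^ (m - 2*j) * X 1 ^ j) = 0 := by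
    intro j hj
    have := hz j (Finset.mem_range.mp hj)
    have hcj : c j = 0 := by
      rcases mul_eq_zero.mp this with h | h
      · exact absurd h (by positivity)
      · exact h
    rw [hcj]
    simp
  have : f - g = 0 := by rw [hc, Finset.sum_congr rfl hcz, Finset.sum_const_zero]
  exact sub_eq_zero.mp this

theorem lucas_atomic_factorization (n : ℕ) (hn : 1 ≤ n) :
    ∃ P : ℕ → MvPolynomial (Fin 2) ℤ,
      P 1 = 1 ∧
      lucas n = ∏ d ∈ n.divisors, P d ∧
      ∀ d ∈ n.divisors, 2 ≤ d →
        MvPolynomial.aeval ![1 + Polynomial.X, -Polynomial.X] (P d) =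
          Polynomial.cyclotomic d ℤ := by
  have hex : ∀ d : ℕ, ∃ Q : MvPolynomial (Fin 2) ℤ,
      IsWeightedHomogeneous ww Q (if d = 1 then 0 else Nat.totient d) ∧
      (2 ≤ d → MvPolynomial.aeval vv Q = cyclotomic d ℤ) ∧ (d ≤ 1 → Q = 1) := by
    intro d
    rcases Nat.lt_or_ge d 2 with hd | hd
    · refine ⟨1, ?_, fun h => absurd h (by omega), fun _ => rfl⟩
      have h0 : (if d = 1 then 0 else Nat.totient d) = 0 := by
        interval_cases d <;> simp
      rw [h0]
      exact isWeightedHomogeneous_one ℤ ww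
    · have href := cyclo_reflect d (by omega)
      rw [if_neg (by omega), one_mul] at href
      have hdeg : (cyclotomic d ℤ).natDegree ≤ Nat.totient d := le_of_eq (natDegree_cyclotomic d ℤ)
      have hsym : ∀ i ≤ Nat.totient d,
          (cyclotomic d ℤ).coeff (Nat.totient d - i) = (cyclotomic d ℤ).coeff i := by
        intro i hi
        conv_rhs => rw [← href]
        rw [Polynomial.coeff_reflect, Polynomial.revAt_le hi]
      obtain ⟨P, hPw, hPa⟩ := span_pal (Nat.totient d) _ hdeg hsym
      exact ⟨P, by rw [if_neg (by omega)]; exact hPw, fun _ => hPa,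
        fun h => absurd h (by omega)⟩
  choose P hw ha h1 using hex
  have h1mem : 1 ∈ n.divisors := Nat.one_mem_divisors.mpr (by omega)
  refine ⟨P, h1 1 (le_refl 1), ?_, fun d _ h2 => ha d h2⟩
  apply whomog_aeval_inj (m := n - 1) (lucas_whomog n)
  · have hprod := IsWeightedHomogeneous.prod n.divisors P
      (fun d => if d = 1 then 0 else Nat.totient d) (fun d _ => hw d)
    have hsum : ∑ d ∈ n.divisors, (if d = 1 then 0 else Nat.totient d) = n - 1 := by
      have e1 : ∑ d ∈ n.divisors, (if d = 1 then 0 else Nat.totient d)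
          = (if (1:ℕ) = 1 then 0 else Nat.totient 1) + ∑ d ∈ n.divisors.erase 1, (if d = 1 then 0 else Nat.totient d) :=
        (Finset.add_sum_erase _ _ h1mem).symm
      have e2 : ∑ d ∈ n.divisors.erase 1, (if d = 1 then 0 else Nat.totient d)
          = ∑ d ∈ n.divisors.erase 1, Nat.totient d :=
        Finset.sum_congr rfl fun d hd => if_neg (Finset.ne_of_mem_erase hd)
      have e3 : Nat.totient 1 + ∑ d ∈ n.divisors.erase 1, Nat.totient d = n := by
        rw [Finset.add_sum_erase _ _ h1mem]
        exact Nat.sum_totient n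
      rw [e1, e2, if_pos rfl, zero_add]
      rw [Nat.totient_one] at e3
      omega
    rwa [hsum] at hprod
  · rw [aeval_lucas n, map_prod, ← Finset.mul_prod_erase _ _ h1mem, h1 1 (le_refl 1)]
    rw [map_one, one_mul]
    rw [← prod_cyclotomic_eq_geom_sum (by omega : 0 < n) ℤ]
    refine Finset.prod_congr rfl fun d hd => ?_
    have hd1 : d ≠ 1 := Finset.ne_of_mem_erase hd
    have hdpos : 0 < d := Nat.pos_of_mem_divisors (Finset.mem_of_mem_erase hd)
    exact (ha d (by omega)).symm

end LucasAux
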